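/- Fix positive reals λ_e, T, W, C, κ_c, γ and reals B̃ < 0, p_th ≥ 0, f_max ≥ 0, and Q_U ≥ Q_S ≥ 0. Define F(f) = λ_e·B̃·κ_c·f³·T + Q_U·f·T/C, G(p) = λ_e·B̃·p·T + (Q_U − Q_S)·T·W·log₂(1 + p·γ), the feasible set S = {(p, f) : 0 ≤ p ≤ p_th, 0 ≤ f ≤ f_max, W·T·log₂(1 + p·γ) + f·T/C ≤ Q_U}, F_p(f) = (1/γ)·2^{(Q_U − f·T/C)/(W·T)} − 1/γ, F_f(p) = (Q_U − W·T·log₂(1 + p·γ))·C/T, p̄_th = min(p_th, F_p(0)), f̄_th = min(f_max, Q_U·C/T), f̂ = min(√(Q_U/(3·λ_e·(−B̃)·κ_c·C)), f̄_th), and p̂ = min(max((Q_S − Q_U)·W/(λ_e·B̃·ln 2) − 1/γ, 0), p̄_th). Suppose W·T·log₂(1 + p̂·γ) + f̂·T/C > Q_U. Let f̄ be the unique nonnegative root of U'(f) = 3·λ_e·κ_c·T·B̃·f² − λ_e·B̃·T·A₀·2^{−f/(W·C)} + (T/C)·Q_S, where A₀ = (ln 2/(W·C·γ))·2^{Q_U/(W·T)},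 and set f* = min(max(f̄, max(0, F_f(p̂))), f̂). Then (F_p(f*), f*) ∈ S and F(f) + G(p) ≤ F(f*) + G(F_p(f*)) for all (p, f) ∈ S. -/

import Mathlib

set_option maxHeartbeats 4000000

lemma two_rpow_lower (a b : ℝ) :
    (2:ℝ)^a * ((b - a) * Real.log 2) ≤ (2:ℝ)^b - (2:ℝ)^a := by
  have h2 : (0:ℝ) < 2 := two_pos
  rw [Real.rpow_def_of_pos h2, Real.rpow_def_of_pos h2]
  have h1 := Real.add_one_le_exp ((b - a) * Real.log 2)
  have h3 : Real.exp (Real.log 2 * a) * Real.exp ((b - a) * Real.log 2)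
      = Real.exp (Real.log 2 * b) := by rw [← Real.exp_add]; ring_nf
  nlinarith [Real.exp_pos (Real.log 2 * a)]

lemma log_diff_le {u v : ℝ} (hu : 0 < u) (hv : 0 < v) :
    Real.log v - Real.log u ≤ (v - u) / u := by
  have h := Real.log_le_sub_one_of_pos (div_pos hv hu)
  rw [Real.log_div hv.ne' hu.ne'] at h
  rw [div_sub_one hu.ne'] at h
  linarith

lemma log_diff_ge {u v : ℝ} (hu : 0 < u) (hv : 0 < v) :
    (v - u) / v ≤ Real.log v - Real.log u := by
  have h := log_diff_le hv hu
  linarith [(by ring : (u - v) / v = -((v - u) / v)) ▸ h]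

lemma Fmono_aux (lamE T C kc Bt QU x y : ℝ) (hT : 0 < T) (hC : 0 < C)
    (hpos : 0 < lamE*(-Bt)*kc) (hx : 0 ≤ x) (hxy : x ≤ y)
    (hkey : 3*(lamE*(-Bt)*kc)*C*y^2 ≤ QU) :
    lamE*Bt*kc*x^3*T + QU*x*T/C ≤ lamE*Bt*kc*y^3*T + QU*y*T/C := by
  have key : 0 ≤ T*((y-x)*(QU - 3*(lamE*(-Bt)*kc)*C*y^2)
      + (lamE*(-Bt)*kc)*C*((y-x)^2*(2*y+x))) :=
    mul_nonneg hT.le (add_nonneg (mul_nonneg (sub_nonneg.2 hxy) (sub_nonneg.2 hkey))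
      (mul_nonneg (mul_nonneg hpos.le hC.le) (mul_nonneg (sq_nonneg _) (by linarith))))
  have hclear : lamE*Bt*kc*x^3*T*C + QU*x*T ≤ lamE*Bt*kc*y^3*T*C + QU*y*T := by nlinarith [key]
  have e1 : lamE*Bt*kc*x^3*T + QU*x*T/C = (lamE*Bt*kc*x^3*T*C + QU*x*T)/C := by
    field_simp
  have e2 : lamE*Bt*kc*y^3*T + QU*y*T/C = (lamE*Bt*kc*y^3*T*C + QU*y*T)/C := by
    field_simp
  rw [e1, e2]
  gcongr

lemma Fanti_aux (lamE T C kc Bt QU x y : ℝ) (hT : 0 < T) (hC : 0 < C)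
    (hpos : 0 < lamE*(-Bt)*kc) (hx : 0 ≤ x) (hxy : x ≤ y)
    (hkey : QU ≤ 3*(lamE*(-Bt)*kc)*C*x^2) :
    lamE*Bt*kc*y^3*T + QU*y*T/C ≤ lamE*Bt*kc*x^3*T + QU*x*T/C := by
  have key : 0 ≤ T*((y-x)*(3*(lamE*(-Bt)*kc)*C*x^2 - QU)
      + (lamE*(-Bt)*kc)*C*((y-x)^2*(y+2*x))) :=
    mul_nonneg hT.le (add_nonneg (mul_nonneg (sub_nonneg.2 hxy) (sub_nonneg.2 hkey))
      (mul_nonneg (mul_nonneg hpos.le hC.le) (mul_nonneg (sq_nonneg _) (by linarith))))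
  have hclear : lamE*Bt*kc*y^3*T*C + QU*y*T ≤ lamE*Bt*kc*x^3*T*C + QU*x*T := by nlinarith [key]
  have e1 : lamE*Bt*kc*x^3*T + QU*x*T/C = (lamE*Bt*kc*x^3*T*C + QU*x*T)/C := by
    field_simp
  have e2 : lamE*Bt*kc*y^3*T + QU*y*T/C = (lamE*Bt*kc*y^3*T*C + QU*y*T)/C := by
    field_simp
  rw [e1, e2]
  gcongr

lemma Gmono_aux (lamE Bt T D W γ x y : ℝ) (hlamE : 0 < lamE) (hB : Bt < 0)
    (hT : 0 < T) (hW : 0 < W) (hγ : 0 < γ) (hD : 0 ≤ D)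
    (hx : 0 ≤ x) (hxy : x ≤ y)
    (hkey : (1+y*γ)*(lamE*(-Bt)*Real.log 2) ≤ D*W*γ) :
    lamE*Bt*x*T + D*T*W*Real.logb 2 (1+x*γ) ≤ lamE*Bt*y*T + D*T*W*Real.logb 2 (1+y*γ) := by
  have hln2 : 0 < Real.log 2 := Real.log_pos one_lt_two
  have hu : 0 < 1+x*γ := by nlinarith
  have hv : 0 < 1+y*γ := by nlinarith
  have hlog := log_diff_ge hu hv
  simp only [Real.logb]
  have h1 : D*T*W/Real.log 2 * ((1+y*γ - (1+x*γ))/(1+y*γ))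
      ≤ D*T*W/Real.log 2 * (Real.log (1+y*γ) - Real.log (1+x*γ)) :=
    mul_le_mul_of_nonneg_left hlog
      (div_nonneg (mul_nonneg (mul_nonneg hD hT.le) hW.le) hln2.le)
  have hnum : 0 ≤ lamE*Bt*T*(y-x)*(Real.log 2*(1+y*γ)) + D*T*W*(γ*(y-x)) := by
    nlinarith [mul_le_mul_of_nonneg_left hkey (mul_nonneg hT.le (sub_nonneg.2 hxy))]
  have heq : lamE*Bt*T*(y-x) + D*T*W/Real.log 2 * ((1+y*γ - (1+x*γ))/(1+y*γ))
      = (lamE*Bt*T*(y-x)*(Real.log 2*(1+y*γ)) + D*T*W*(γ*(y-x))) / (Real.log 2*(1+y*γ)) := by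
    rw [eq_div_iff (mul_ne_zero hln2.ne' hv.ne')]
    field_simp
    try ring
    try tauto
  have h2 : 0 ≤ lamE*Bt*T*(y-x) + D*T*W/Real.log 2 * ((1+y*γ - (1+x*γ))/(1+y*γ)) := by
    rw [heq]; exact div_nonneg hnum (mul_nonneg hln2.le hv.le)
  ring_nf at h1 h2 ⊢
  linarith [h1, h2]

lemma Ganti_aux (lamE Bt T D W γ x y : ℝ) (hlamE : 0 < lamE) (hB : Bt < 0)
    (hT : 0 < T) (hW : 0 < W) (hγ : 0 < γ) (hD : 0 ≤ D)
    (hx : 0 ≤ x) (hxy : x ≤ y)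
    (hkey : D*W*γ ≤ (1+x*γ)*(lamE*(-Bt)*Real.log 2)) :
    lamE*Bt*y*T + D*T*W*Real.logb 2 (1+y*γ) ≤ lamE*Bt*x*T + D*T*W*Real.logb 2 (1+x*γ) := by
  have hln2 : 0 < Real.log 2 := Real.log_pos one_lt_two
  have hu : 0 < 1+x*γ := by nlinarith
  have hv : 0 < 1+y*γ := by nlinarith
  have hlog := log_diff_le hu hv
  simp only [Real.logb]
  have h1 : D*T*W/Real.log 2 * (Real.log (1+y*γ) - Real.log (1+x*γ))
      ≤ D*T*W/Real.log 2 * ((1+y*γ - (1+x*γ))/(1+x*γ)) :=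
    mul_le_mul_of_nonneg_left hlog
      (div_nonneg (mul_nonneg (mul_nonneg hD hT.le) hW.le) hln2.le)
  have hnum : lamE*Bt*T*(y-x)*(Real.log 2*(1+x*γ)) + D*T*W*(γ*(y-x)) ≤ 0 := by
    nlinarith [mul_le_mul_of_nonneg_left hkey (mul_nonneg hT.le (sub_nonneg.2 hxy))]
  have heq : lamE*Bt*T*(y-x) + D*T*W/Real.log 2 * ((1+y*γ - (1+x*γ))/(1+x*γ))
      = (lamE*Bt*T*(y-x)*(Real.log 2*(1+x*γ)) + D*T*W*(γ*(y-x))) / (Real.log 2*(1+x*γ)) := by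
    rw [eq_div_iff (mul_ne_zero hln2.ne' hu.ne')]
    field_simp
    try ring
    try tauto
  have h2 : lamE*Bt*T*(y-x) + D*T*W/Real.log 2 * ((1+y*γ - (1+x*γ))/(1+x*γ)) ≤ 0 := by
    rw [heq]
    exact div_nonpos_iff.mpr (Or.inr ⟨hnum, (mul_nonneg hln2.le hu.le)⟩)
  ring_nf at h1 h2 ⊢
  linarith [h1, h2]

lemma Hmono_aux (lamE Bt T kc C W K A0 QS x y : ℝ)
    (hlamE : 0 < lamE) (hB : Bt < 0) (hT : 0 < T) (hkc : 0 < kc)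
    (hC : 0 < C) (hW : 0 < W) (hK : 0 < K)
    (hA0 : A0 = K * Real.log 2 / (W * C))
    (hx : 0 ≤ x) (hxy : x ≤ y)
    (hU : 0 ≤ 3*lamE*kc*T*Bt*y^2 - lamE*Bt*T*A0*(2:ℝ)^(-y/(W*C)) + T/C*QS) :
    lamE*Bt*kc*x^3*T + QS*x*T/C + lamE*Bt*T*(K*(2:ℝ)^(-x/(W*C)))
      ≤ lamE*Bt*kc*y^3*T + QS*y*T/C + lamE*Bt*T*(K*(2:ℝ)^(-y/(W*C))) := by
  have hexp := two_rpow_lower (-y/(W*C)) (-x/(W*C))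
  have hc : 0 ≤ -(lamE*Bt*T*K) := by nlinarith [mul_pos (mul_pos hlamE hT) hK]
  have h2 := mul_le_mul_of_nonneg_left hexp hc
  have heq2 : -(lamE*Bt*T*K) * ((2:ℝ)^(-y/(W*C)) * ((-x/(W*C) - -y/(W*C)) * Real.log 2))
      = (y-x) * (-(lamE*Bt*T*A0) * (2:ℝ)^(-y/(W*C))) := by rw [hA0]; ring
  rw [heq2] at h2
  have t1 : 0 ≤ lamE*(-Bt)*kc*T*((y-x)^2*(2*y+x)) :=
    mul_nonneg (by nlinarith [mul_pos (mul_pos hlamE hkc) hT] : (0:ℝ) ≤ lamE*(-Bt)*kc*T)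
      (mul_nonneg (sq_nonneg _) (by linarith))
  have t3 := mul_nonneg (sub_nonneg.2 hxy) hU
  ring_nf at t1 h2 t3 ⊢
  linarith [t1, h2, t3]

lemma Hanti_aux (lamE Bt T kc C W K A0 QS x y : ℝ)
    (hlamE : 0 < lamE) (hB : Bt < 0) (hT : 0 < T) (hkc : 0 < kc)
    (hC : 0 < C) (hW : 0 < W) (hK : 0 < K)
    (hA0 : A0 = K * Real.log 2 / (W * C))
    (hx : 0 ≤ x) (hxy : x ≤ y)
    (hU : 3*lamE*kc*T*Bt*x^2 - lamE*Bt*T*A0*(2:ℝ)^(-x/(W*C)) + T/C*QS ≤ 0) :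
    lamE*Bt*kc*y^3*T + QS*y*T/C + lamE*Bt*T*(K*(2:ℝ)^(-y/(W*C)))
      ≤ lamE*Bt*kc*x^3*T + QS*x*T/C + lamE*Bt*T*(K*(2:ℝ)^(-x/(W*C))) := by
  have hexp := two_rpow_lower (-x/(W*C)) (-y/(W*C))
  have hc : lamE*Bt*T*K ≤ 0 := by nlinarith [mul_pos (mul_pos hlamE hT) hK]
  have h2 := mul_le_mul_of_nonpos_left hexp hc
  have heq2 : (lamE*Bt*T*K) * ((2:ℝ)^(-x/(W*C)) * ((-y/(W*C) - -x/(W*C)) * Real.log 2))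
      = (y-x) * (-(lamE*Bt*T*A0) * (2:ℝ)^(-x/(W*C))) := by rw [hA0]; ring
  rw [heq2] at h2
  have t1 : 0 ≤ lamE*(-Bt)*kc*T*((y-x)^2*(y+2*x)) :=
    mul_nonneg (by nlinarith [mul_pos (mul_pos hlamE hkc) hT] : (0:ℝ) ≤ lamE*(-Bt)*kc*T)
      (mul_nonneg (sq_nonneg _) (by linarith))
  have t3 := mul_nonpos_of_nonneg_of_nonpos (sub_nonneg.2 hxy) hU
  ring_nf at t1 h2 t3 ⊢
  linarith [t1, h2, t3]
/-- Case (17c) of Proposition 1: when the separately optimal pair `(p̂, f̂)`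
violates the data causality constraint and the battery is not full, the optimum
lies on the constraint surface `p = Fp f` at the clamped root `f*` of `U'`. -/
theorem task_execution_case_c
    (lamE T W C kc γ Bt pth fmax QU QS : ℝ)
    (hlamE : 0 < lamE) (hT : 0 < T) (hW : 0 < W) (hC : 0 < C)
    (hkc : 0 < kc) (hγ : 0 < γ) (hB : Bt < 0)
    (hpth : 0 ≤ pth) (hfmax : 0 ≤ fmax) (hQ : QS ≤ QU) (hQS : 0 ≤ QS)
    (F G : ℝ → ℝ)
    (hF : ∀ f, F f = lamE * Bt * kc * f^3 * T + QU * f * T / C)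
    (hG : ∀ p, G p = lamE * Bt * p * T
        + (QU - QS) * T * W * Real.logb 2 (1 + p * γ))
    (Fp Ff : ℝ → ℝ)
    (hFp : ∀ f, Fp f = (1 / γ) * (2 : ℝ) ^ ((QU - f * T / C) / (W * T)) - 1 / γ)
    (hFf : ∀ p, Ff p = (QU - W * T * Real.logb 2 (1 + p * γ)) * C / T)
    (pbarth fbarth fhat phat : ℝ)
    (hpbarth : pbarth = min pth (Fp 0))
    (hfbarth : fbarth = min fmax (QU * C / T))
    (hfhat : fhat = min (Real.sqrt (QU / (3 * lamE * (-Bt) * kc * C))) fbarth)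
    (hphat : phat = min (max ((QS - QU) * W / (lamE * Bt * Real.log 2) - 1 / γ) 0) pbarth)
    (hcase : QU < W * T * Real.logb 2 (1 + phat * γ) + fhat * T / C)
    (A0 : ℝ) (hA0 : A0 = (Real.log 2 / (W * C * γ)) * (2 : ℝ) ^ (QU / (W * T)))
    (U' : ℝ → ℝ)
    (hU' : ∀ f, U' f = 3 * lamE * kc * T * Bt * f^2
        - lamE * Bt * T * A0 * (2 : ℝ) ^ (-f / (W * C)) + (T / C) * QS)
    (fbar : ℝ) (hfbar : 0 ≤ fbar ∧ U' fbar = 0)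
    (hfbar_uniq : ∀ f, 0 ≤ f ∧ U' f = 0 → f = fbar)
    (fstar : ℝ) (hfstar : fstar = min (max fbar (max 0 (Ff phat))) fhat) :
    (0 ≤ Fp fstar ∧ Fp fstar ≤ pth ∧ 0 ≤ fstar ∧ fstar ≤ fmax ∧
      W * T * Real.logb 2 (1 + Fp fstar * γ) + fstar * T / C ≤ QU) ∧
    ∀ p f : ℝ, 0 ≤ p → p ≤ pth → 0 ≤ f → f ≤ fmax →
      W * T * Real.logb 2 (1 + p * γ) + f * T / C ≤ QU →
      F f + G p ≤ F fstar + G (Fp fstar) := by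
  have hln2 : 0 < Real.log 2 := Real.log_pos one_lt_two
  have hb : 0 < -Bt := neg_pos.2 hB
  have hQU : 0 ≤ QU := le_trans hQS hQ
  have hD : 0 ≤ QU - QS := sub_nonneg.2 hQ
  set K : ℝ := (1 / γ) * (2 : ℝ) ^ (QU / (W * T)) with hK
  have hKpos : 0 < K := by positivity
  set s : ℝ := QU / (3 * lamE * (-Bt) * kc * C) with hs
  have hs0 : 0 ≤ s := by positivity
  set p0 : ℝ := (QS - QU) * W / (lamE * Bt * Real.log 2) - 1 / γ with hp0
  -- Fp in exponential form
  have hFpK : ∀ f, Fp f = K * (2:ℝ) ^ (-f / (W * C)) - 1 / γ := by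
    intro f
    rw [hFp f, hK]
    have he : (QU - f * T / C) / (W * T) = QU / (W * T) + (-f / (W * C)) := by
      field_simp; ring
    rw [he, Real.rpow_add two_pos]; ring
  have hFpγ : ∀ f, 1 + Fp f * γ = (2:ℝ) ^ ((QU - f * T / C) / (W * T)) := by
    intro f
    rw [hFp f]
    field_simp
    ring
  have hFp_pos : ∀ f, 0 < 1 + Fp f * γ := by
    intro f; rw [hFpγ f]; positivity
  have hlogFp : ∀ f, Real.logb 2 (1 + Fp f * γ) = (QU - f * T / C) / (W * T) := by
    intro f; rw [hFpγ f]; exact Real.logb_rpow two_pos (by norm_num)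
  have hFp_anti : ∀ x y, x ≤ y → Fp y ≤ Fp x := by
    intro x y h
    rw [hFpK x, hFpK y]
    have : (2:ℝ) ^ (-y / (W * C)) ≤ (2:ℝ) ^ (-x / (W * C)) := by
      apply (Real.rpow_le_rpow_left_iff one_lt_two).2
      gcongr ?_ / _
      linarith
    have h2 := mul_le_mul_of_nonneg_left this hKpos.le
    linarith
  have hFp_santi : ∀ x y, x < y → Fp y < Fp x := by
    intro x y h
    rw [hFpK x, hFpK y]
    have : (2:ℝ) ^ (-y / (W * C)) < (2:ℝ) ^ (-x / (W * C)) := by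
      apply (Real.rpow_lt_rpow_left_iff one_lt_two).2
      exact (div_lt_div_iff_of_pos_right (mul_pos hW hC)).2 (by linarith)
    have h2 := mul_lt_mul_of_pos_left this hKpos
    linarith
  -- constraint ↔ p ≤ Fp f
  have hcons_of_le : ∀ p f, 0 ≤ p → p ≤ Fp f →
      W * T * Real.logb 2 (1 + p * γ) + f * T / C ≤ QU := by
    intro p f hp hle
    have hu : 0 < 1 + p * γ := by linarith [mul_nonneg hp hγ.le]
    have h1 : 1 + p * γ ≤ 1 + Fp f * γ := by
      linarith [mul_le_mul_of_nonneg_right hle hγ.le]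
    have h2 : Real.logb 2 (1 + p * γ) ≤ (QU - f * T / C) / (W * T) := by
      rw [← hlogFp f]
      exact Real.logb_le_logb_of_le one_lt_two hu h1
    have h3 : W * T * Real.logb 2 (1 + p * γ) ≤ W * T * ((QU - f * T / C) / (W * T)) :=
      mul_le_mul_of_nonneg_left h2 (by positivity)
    have h4 : W * T * ((QU - f * T / C) / (W * T)) = QU - f * T / C := by
      field_simp
    linarith
  have hle_of_cons : ∀ p f, 0 ≤ p →
      W * T * Real.logb 2 (1 + p * γ) + f * T / C ≤ QU → p ≤ Fp f := by
    intro p f hp hcons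
    have hu : 0 < 1 + p * γ := by linarith [mul_nonneg hp hγ.le]
    have h2 : Real.logb 2 (1 + p * γ) ≤ (QU - f * T / C) / (W * T) := by
      rw [le_div_iff₀ (mul_pos hW hT)]
      linarith
    have h3 : 1 + p * γ ≤ 1 + Fp f * γ := by
      rw [hFpγ f]
      calc 1 + p * γ = (2:ℝ) ^ Real.logb 2 (1 + p * γ) :=
            (Real.rpow_logb two_pos (by norm_num) hu).symm
        _ ≤ _ := (Real.rpow_le_rpow_left_iff one_lt_two).2 h2
    have h4 : p * γ ≤ Fp f * γ := by linarith
    exact le_of_mul_le_mul_right (by linarith) hγ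
  have hWC : 0 < W * C := mul_pos hW hC
  have hA0K : A0 = K * Real.log 2 / (W * C) := by
    rw [hA0, hK]; field_simp
  have hA0pos : 0 < A0 := by rw [hA0]; positivity
  have hGFp : ∀ f, G (Fp f) = lamE * Bt * Fp f * T + (QU - QS) * (QU - f * T / C) := by
    intro f
    rw [hG, hlogFp]
    have : (QU - QS) * T * W * ((QU - f * T / C) / (W * T)) = (QU - QS) * (QU - f * T / C) := by
      field_simp
    rw [this]
  have hFp_inv : ∀ q, 0 ≤ q → Fp (Ff q) = q := by
    intro q hq
    have hu : 0 < 1 + q * γ := by linarith [mul_nonneg hq hγ.le]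
    rw [hFp, hFf]
    have he : (QU - (QU - W * T * Real.logb 2 (1 + q * γ)) * C / T * T / C) / (W * T)
        = Real.logb 2 (1 + q * γ) := by
      field_simp
      ring
    rw [he, Real.rpow_logb two_pos (by norm_num) hu]
    field_simp
    ring
  have hQCT : 0 ≤ QU * C / T := by positivity
  have hFpQCT : Fp (QU * C / T) = 0 := by
    rw [hFp]
    have he : (QU - QU * C / T * T / C) / (W * T) = 0 := by field_simp; ring
    rw [he, Real.rpow_zero]
    ring
  have hFp_nonneg : ∀ f, f ≤ QU * C / T → 0 ≤ Fp f := by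
    intro f hf
    have := hFp_anti f (QU * C / T) hf
    rw [hFpQCT] at this
    exact this
  have hFp0 : 0 ≤ Fp 0 := hFp_nonneg 0 hQCT
  have hpbar0 : 0 ≤ pbarth := hpbarth ▸ le_min hpth hFp0
  have hfbarth0 : 0 ≤ fbarth := hfbarth ▸ le_min hfmax hQCT
  have hfhat0 : 0 ≤ fhat := hfhat ▸ le_min (Real.sqrt_nonneg _) hfbarth0
  have hphat0 : 0 ≤ phat := hphat ▸ le_min (le_max_right _ _) hpbar0
  have hphat_pbar : phat ≤ pbarth := hphat ▸ min_le_right _ _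
  have hpbar_pth : pbarth ≤ pth := hpbarth ▸ min_le_left _ _
  have hpbar_Fp0 : pbarth ≤ Fp 0 := hpbarth ▸ min_le_right _ _
  have hfhat_fbarth : fhat ≤ fbarth := hfhat ▸ min_le_right _ _
  have hfbarth_fmax : fbarth ≤ fmax := hfbarth ▸ min_le_left _ _
  have hfbarth_Q : fbarth ≤ QU * C / T := hfbarth ▸ min_le_right _ _
  have hfhatQ : fhat ≤ QU * C / T := le_trans hfhat_fbarth hfbarth_Q
  have hFpfhat0 : 0 ≤ Fp fhat := hFp_nonneg fhat hfhatQ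
  have hcase2 : Fp fhat < phat := by
    by_contra hcon
    push_neg at hcon
    have := hcons_of_le phat fhat hphat0 hcon
    linarith
  have hFf_phat_lt : Ff phat < fhat := by
    by_contra hcon
    push_neg at hcon
    have h1 : Fp (Ff phat) ≤ Fp fhat := hFp_anti fhat (Ff phat) hcon
    rw [hFp_inv phat hphat0] at h1
    linarith
  set L := max 0 (Ff phat) with hL
  have hL0 : 0 ≤ L := le_max_left _ _
  have hLfhat : L ≤ fhat := max_le hfhat0 hFf_phat_lt.le
  have hfs_fhat : fstar ≤ fhat := by rw [hfstar]; exact min_le_right _ _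
  have hfs_L : L ≤ fstar := by rw [hfstar]; exact le_min (le_max_right _ _) hLfhat
  have hfs0 : 0 ≤ fstar := le_trans hL0 hfs_L
  have hfs_Ff : Ff phat ≤ fstar := le_trans (le_max_right 0 _) hfs_L
  have hfsQ : fstar ≤ QU * C / T := le_trans hfs_fhat hfhatQ
  have hFpfs0 : 0 ≤ Fp fstar := hFp_nonneg _ hfsQ
  have hFpfs_phat : Fp fstar ≤ phat := by
    have := hFp_anti (Ff phat) fstar hfs_Ff
    rw [hFp_inv phat hphat0] at this
    exact this
  have hFpfs_pth : Fp fstar ≤ pth := le_trans hFpfs_phat (le_trans hphat_pbar hpbar_pth)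
  have hconsEq : W * T * Real.logb 2 (1 + Fp fstar * γ) + fstar * T / C ≤ QU := by
    rw [hlogFp]
    have : W * T * ((QU - fstar * T / C) / (W * T)) = QU - fstar * T / C := by
      field_simp
    rw [this]
    exact le_of_eq (by ring)
  -- F monotonicity
  have hFmono : ∀ x y, 0 ≤ x → x ≤ y → y ≤ fhat → F x ≤ F y := by
    intro x y hx hxy hyf
    rw [hF, hF]
    apply Fmono_aux lamE T C kc Bt QU x y hT hC (by positivity) hx hxy
    have h1 : y ≤ Real.sqrt s := le_trans hyf (hfhat ▸ min_le_left _ _)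
    have h2 : y * y ≤ Real.sqrt s * Real.sqrt s :=
      mul_self_le_mul_self (le_trans hx hxy) h1
    have h3 : Real.sqrt s * Real.sqrt s = s := Real.mul_self_sqrt hs0
    have h4 : s * (3 * (lamE * (-Bt) * kc) * C) = QU := by
      have hd : (0:ℝ) < 3 * lamE * (-Bt) * kc * C := by positivity
      rw [hs, show 3 * (lamE * (-Bt) * kc) * C = 3 * lamE * (-Bt) * kc * C from by ring]
      exact div_mul_cancel₀ QU hd.ne'
    have h5 := mul_le_mul_of_nonneg_left (h3 ▸ h2)
      (by positivity : (0:ℝ) ≤ 3 * (lamE * (-Bt) * kc) * C)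
    linarith [h5, h4]
  have hFanti : ∀ x y, Real.sqrt s ≤ x → x ≤ y → F y ≤ F x := by
    intro x y hsx hxy
    have hx : 0 ≤ x := le_trans (Real.sqrt_nonneg _) hsx
    rw [hF, hF]
    apply Fanti_aux lamE T C kc Bt QU x y hT hC (by positivity) hx hxy
    have h2 : Real.sqrt s * Real.sqrt s ≤ x * x :=
      mul_self_le_mul_self (Real.sqrt_nonneg _) hsx
    have h3 : Real.sqrt s * Real.sqrt s = s := Real.mul_self_sqrt hs0
    have h4 : s * (3 * (lamE * (-Bt) * kc) * C) = QU := by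
      have hd : (0:ℝ) < 3 * lamE * (-Bt) * kc * C := by positivity
      rw [hs, show 3 * (lamE * (-Bt) * kc) * C = 3 * lamE * (-Bt) * kc * C from by ring]
      exact div_mul_cancel₀ QU hd.ne'
    have h5 := mul_le_mul_of_nonneg_left (h3 ▸ h2)
      (by positivity : (0:ℝ) ≤ 3 * (lamE * (-Bt) * kc) * C)
    linarith [h5, h4]
  -- G monotonicity
  have hp0eq : (1 + p0 * γ) * (lamE * (-Bt) * Real.log 2) = (QU - QS) * W * γ := by
    rw [hp0]; field_simp [hγ.ne', hln2.ne', hB.ne, hlamE.ne']; ring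
  have hGmono : ∀ x y, 0 ≤ x → x ≤ y →
      (1 + y * γ) * (lamE * (-Bt) * Real.log 2) ≤ (QU - QS) * W * γ → G x ≤ G y := by
    intro x y hx hxy hkey
    rw [hG, hG]
    exact Gmono_aux lamE Bt T (QU - QS) W γ x y hlamE hB hT hW hγ hD hx hxy hkey
  have hGanti : ∀ x y, 0 ≤ x → x ≤ y →
      (QU - QS) * W * γ ≤ (1 + x * γ) * (lamE * (-Bt) * Real.log 2) → G y ≤ G x := by
    intro x y hx hxy hkey
    rw [hG, hG]
    exact Ganti_aux lamE Bt T (QU - QS) W γ x y hlamE hB hT hW hγ hD hx hxy hkey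
  -- H = F + G ∘ Fp expansion and monotonicity
  have hHexpand : ∀ z, F z + G (Fp z) = lamE * Bt * kc * z^3 * T + QS * z * T / C
      + lamE * Bt * T * (K * (2:ℝ) ^ (-z / (W * C)))
      + (lamE * Bt * T * (-1/γ) + (QU - QS) * QU) := by
    intro z
    rw [hF, hGFp, hFpK]
    ring
  have hHmono : ∀ x y, 0 ≤ x → x ≤ y → 0 ≤ U' y → F x + G (Fp x) ≤ F y + G (Fp y) := by
    intro x y hx hxy hUy
    rw [hHexpand, hHexpand]
    rw [hU'] at hUy
    have := Hmono_aux lamE Bt T kc C W K A0 QS x y hlamE hB hT hkc hC hW hKpos hA0K hx hxy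
      (by linarith)
    linarith
  have hHanti : ∀ x y, 0 ≤ x → x ≤ y → U' x ≤ 0 → F y + G (Fp y) ≤ F x + G (Fp x) := by
    intro x y hx hxy hUx
    rw [hHexpand, hHexpand]
    rw [hU'] at hUx
    have := Hanti_aux lamE Bt T kc C W K A0 QS x y hlamE hB hT hkc hC hW hKpos hA0K hx hxy
      (by linarith)
    linarith
  -- U' is antitone on [0, ∞)
  have hU'anti : ∀ x y, 0 ≤ x → x ≤ y → U' y ≤ U' x := by
    intro x y hx hxy
    rw [hU', hU']
    have h2 : (2:ℝ) ^ (-y / (W * C)) ≤ (2:ℝ) ^ (-x / (W * C)) := by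
      apply (Real.rpow_le_rpow_left_iff one_lt_two).2
      gcongr ?_ / _
      linarith
    have c1 : 3 * lamE * kc * T * Bt * y^2 ≤ 3 * lamE * kc * T * Bt * x^2 := by
      have e1 := mul_le_mul_of_nonneg_left (mul_self_le_mul_self hx hxy)
        (by positivity : (0:ℝ) ≤ 3 * lamE * kc * T * (-Bt))
      linarith [e1]
    have c2 : lamE * (-Bt) * T * A0 * (2:ℝ) ^ (-y / (W * C))
        ≤ lamE * (-Bt) * T * A0 * (2:ℝ) ^ (-x / (W * C)) :=
      mul_le_mul_of_nonneg_left h2 (by positivity)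
    linarith [c1, c2]
  have hfbar0 : 0 ≤ fbar := hfbar.1
  have hU'fbar : U' fbar = 0 := hfbar.2
  have hU'nonneg : ∀ z, 0 ≤ z → z ≤ fbar → 0 ≤ U' z := by
    intro z hz hzf
    have := hU'anti z fbar hz hzf
    rw [hU'fbar] at this
    linarith
  have hU'nonpos : ∀ z, fbar ≤ z → U' z ≤ 0 := by
    intro z hz
    have := hU'anti fbar z hfbar0 hz
    rw [hU'fbar] at this
    linarith
  -- H comparison at fhat and on [L, fhat]
  have hHfhat : F fhat + G (Fp fhat) ≤ F fstar + G (Fp fstar) := by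
    rcases le_total fhat fbar with h | h
    · have : fstar = fhat := by
        rw [hfstar]
        exact min_eq_right (le_trans h (le_max_left _ _))
      rw [this]
    · have h1 : fbar ≤ fstar := by rw [hfstar]; exact le_min (le_max_left _ _) h
      exact hHanti fstar fhat hfs0 hfs_fhat (hU'nonpos fstar h1)
  have hHstar : ∀ z, L ≤ z → z ≤ fhat →
      F z + G (Fp z) ≤ F fstar + G (Fp fstar) := by
    intro z hLz hzf
    rcases le_total z fstar with h | h
    · rcases le_total L fbar with h2 | h2
      · have hmax : max fbar L = fbar := max_eq_left h2
        have hfs_fbar : fstar ≤ fbar := by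
          rw [hfstar]
          exact (min_le_left _ _).trans (max_eq_left h2).le
        exact hHmono z fstar (le_trans hL0 hLz) h (hU'nonneg fstar hfs0 hfs_fbar)
      · have hmax : max fbar L = L := max_eq_right h2
        have hfsL : fstar ≤ L := by
          rw [hfstar]
          exact (min_le_left _ _).trans (max_eq_right h2).le
        have : z = fstar := le_antisymm h (le_trans hfsL hLz)
        rw [this]
    · rcases le_total (max fbar L) fhat with h2 | h2
      · have hfs_eq : fstar = max fbar L := by rw [hfstar]; exact min_eq_left h2
        have : fbar ≤ fstar := hfs_eq ▸ le_max_left _ _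
        exact hHanti fstar z hfs0 h (hU'nonpos fstar this)
      · have hfs_eq : fstar = fhat := by rw [hfstar]; exact min_eq_right h2
        have : z = fstar := le_antisymm (hfs_eq ▸ hzf) h
        rw [this]
  refine ⟨⟨hFpfs0, hFpfs_pth, hfs0, le_trans hfs_fhat (le_trans hfhat_fbarth hfbarth_fmax),
    hconsEq⟩, ?_⟩
  intro p f hp hpth' hf hfmax' hcons
  have hu : 0 < 1 + p * γ := by linarith [mul_nonneg hp hγ.le]
  have hpFp : p ≤ Fp f := hle_of_cons p f hp hcons
  have hfQ : f ≤ QU * C / T := by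
    have hlb : 0 ≤ Real.logb 2 (1 + p * γ) :=
      Real.logb_nonneg one_lt_two (by linarith [mul_nonneg hp hγ.le])
    have h1 : f * T / C ≤ QU := by linarith [mul_nonneg (mul_pos hW hT).le hlb]
    rw [le_div_iff₀ hT]
    rw [div_le_iff₀ hC] at h1
    linarith
  have hf_fbarth : f ≤ fbarth := hfbarth ▸ le_min hfmax' hfQ
  have hp_pbar : p ≤ pbarth := hpbarth ▸ le_min hpth' (le_trans hpFp (hFp_anti 0 f hf))
  -- Step A : replace f by f1 = min f fhat
  set f1 := min f fhat with hf1
  have hf10 : 0 ≤ f1 := le_min hf hfhat0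
  have hf1hat : f1 ≤ fhat := min_le_right _ _
  have hstepA : F f ≤ F f1 := by
    rcases le_total f fhat with h | h
    · rw [hf1, min_eq_left h]
    · rcases le_total (Real.sqrt s) fbarth with h1 | h1
      · have hfh : fhat = Real.sqrt s := by rw [hfhat]; exact min_eq_left h1
        rw [hf1, min_eq_right h]
        exact hFanti fhat f (le_of_eq hfh.symm) h
      · have hfh : fhat = fbarth := by rw [hfhat]; exact min_eq_right h1
        have : f = fhat := le_antisymm (hfh ▸ hf_fbarth) h
        rw [hf1, min_eq_right h, this]
  have hpFp1 : p ≤ Fp f1 := le_trans hpFp (hFp_anti f1 f (min_le_left _ _))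
  -- Step B : replace p by p1 = min p phat
  set p1 := min p phat with hp1
  have hp10 : 0 ≤ p1 := le_min hp hphat0
  have hp1hat : p1 ≤ phat := min_le_right _ _
  have hp1Fp1 : p1 ≤ Fp f1 := le_trans (min_le_left _ _) hpFp1
  have hstepB : G p ≤ G p1 := by
    rcases le_total p phat with h | h
    · rw [hp1, min_eq_left h]
    · rw [hp1, min_eq_right h]
      rcases le_total (max p0 0) pbarth with h1 | h1
      · have hph : phat = max p0 0 := by rw [hphat]; exact min_eq_left h1
        have hp0phat : p0 ≤ phat := hph ▸ le_max_left _ _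
        apply hGanti phat p hphat0 h
        linarith [hp0eq, mul_nonneg (mul_nonneg (mul_nonneg (mul_pos hlamE hb).le hln2.le)
          hγ.le) (sub_nonneg.2 hp0phat)]
      · have hph : phat = pbarth := by rw [hphat]; exact min_eq_right h1
        have : p = phat := le_antisymm (hph ▸ hp_pbar) h
        rw [this]
  -- Step C : move to the constraint surface
  have hmain : F f1 + G p1 ≤ F fstar + G (Fp fstar) := by
    rcases le_total (Ff p1) fhat with hc | hc
    · -- on the surface at f2 = Ff p1
      have hf2 : f1 ≤ Ff p1 := by
        by_contra hcon
        push_neg at hcon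
        have := hFp_santi (Ff p1) f1 hcon
        rw [hFp_inv p1 hp10] at this
        linarith
      have hL2 : L ≤ Ff p1 := by
        apply max_le
        · have h1 := hcons_of_le p1 0 hp10
            (le_trans (le_trans hp1hat hphat_pbar) hpbar_Fp0)
          rw [hFf]
          have h2 : 0 ≤ QU - W * T * Real.logb 2 (1 + p1 * γ) := by
            have h0 : (0:ℝ) * T / C = 0 := by ring
            rw [h0] at h1
            linarith
          exact div_nonneg (mul_nonneg h2 hC.le) hT.le
        · rw [hFf, hFf]
          have hmono : Real.logb 2 (1 + p1 * γ) ≤ Real.logb 2 (1 + phat * γ) :=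
            Real.logb_le_logb_of_le one_lt_two
              (by linarith [mul_nonneg hp10 hγ.le])
              (by linarith [mul_le_mul_of_nonneg_right hp1hat hγ.le])
          apply (div_le_div_iff_of_pos_right hT).2
          apply mul_le_mul_of_nonneg_right _ hC.le
          linarith [mul_le_mul_of_nonneg_left hmono (mul_pos hW hT).le]
      have hFF : F f1 ≤ F (Ff p1) := hFmono f1 (Ff p1) hf10 hf2 hc
      have hGG : G p1 = G (Fp (Ff p1)) := by rw [hFp_inv p1 hp10]
      calc F f1 + G p1 = F f1 + G (Fp (Ff p1)) := by rw [← hGG]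
        _ ≤ F (Ff p1) + G (Fp (Ff p1)) := by linarith
        _ ≤ _ := hHstar (Ff p1) hL2 hc
    · -- below the surface even at fhat
      have hp1Fpfhat : p1 ≤ Fp fhat := by
        have := hFp_anti fhat (Ff p1) hc
        rw [hFp_inv p1 hp10] at this
        exact this
      have hGstep : G p1 ≤ G (Fp fhat) := by
        apply hGmono p1 (Fp fhat) hp10 hp1Fpfhat
        rcases le_total p0 0 with h0 | h0
        · exfalso
          have : phat ≤ 0 := by
            rw [hphat, max_eq_right h0]
            exact min_le_left _ _
          linarith [hFpfhat0, hcase2]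
        · have hphat_p0 : phat ≤ p0 := by
            rw [hphat, max_eq_left h0]
            exact min_le_left _ _
          have hFple : Fp fhat ≤ p0 := le_trans hcase2.le hphat_p0
          linarith [hp0eq, mul_nonneg (mul_nonneg (mul_nonneg (mul_pos hlamE hb).le hln2.le)
            hγ.le) (sub_nonneg.2 hFple)]
      have hFstep : F f1 ≤ F fhat := hFmono f1 fhat hf10 hf1hat (le_refl fhat)
      calc F f1 + G p1 ≤ F fhat + G (Fp fhat) := by linarith
        _ ≤ _ := hHfhat
  linarith [hstepA, hstepB, hmain]
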